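/- If v ∈ Z_{p^s}^n has additive order p (i.e., v = p^{s-1}·u for some u), then for every w ∈ Z_{p^s}^n, φ_L(v + w) = φ_L(v) + φ_L(w), and φ_L(v) is a constant-blocks vector: each coordinate block φ_L(v_i) is the constant vector (u_i mod p, ..., u_i mod p) of length p^{s-1}. -/

import Mathlib

/-- The extended Lee weight on `ZMod (p^s)`. -/
def leeWt (p s : ℕ) (x : ZMod (p ^ s)) : ℕ :=
  if x.val ≤ p ^ s - p ^ (s - 1) then min x.val (p ^ (s - 1)) else p ^ s - x.val

/-- The Gray map `φ_L : ZMod (p^s) → (F_p)^(p^(s-1))`: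
`x = q·p^(s-1) + r` maps to the vector with `q+1` in the first `r` coordinates
and `q` in the rest. -/
def gray (p s : ℕ) (x : ZMod (p ^ s)) : Fin (p ^ (s - 1)) → ZMod p :=
  fun i =>
    if i.val < x.val % p ^ (s - 1) then ((x.val / p ^ (s - 1) + 1 : ℕ) : ZMod p)
    else ((x.val / p ^ (s - 1) : ℕ) : ZMod p)

/-- The Gray map extended coordinatewise to vectors. -/
def grayV (p s n : ℕ) (v : Fin n → ZMod (p ^ s)) : Fin n → Fin (p ^ (s - 1)) → ZMod p :=
  fun i => gray p s (v i)

private lemma modhelper (N p m r : ℕ) (hN : 0 < N) (hp : 0 < p) (hr : r < N) :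
    (N * m + r) % (N * p) = N * (m % p) + r := by
  have h : N * m + r = (N * (m % p) + r) + (N * p) * (m / p) := by
    conv_lhs => rw [← Nat.div_add_mod m p]
    ring
  have hlt : N * (m % p) + r < N * p := by
    have h2 : m % p + 1 ≤ p := Nat.mod_lt m hp
    calc N * (m % p) + r < N * (m % p) + N := by omega
      _ = N * (m % p + 1) := by ring
      _ ≤ N * p := Nat.mul_le_mul_left N h2
  rw [h, Nat.add_mul_mod_self_left, Nat.mod_eq_of_lt hlt]

private lemma key (p s : ℕ) (hp : p.Prime) (hs : 1 ≤ s) (u y : ZMod (p^s)) :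
    (∀ j, gray p s ((p : ZMod (p^s)) ^ (s-1) * u + y) j
        = gray p s ((p : ZMod (p^s)) ^ (s-1) * u) j + gray p s y j)
    ∧ ∀ j, gray p s ((p : ZMod (p^s)) ^ (s-1) * u) j = ((u.val : ℕ) : ZMod p) := by
  haveI : NeZero (p ^ s) := ⟨pow_ne_zero s hp.pos.ne'⟩
  have hN : 0 < p ^ (s - 1) := Nat.pow_pos hp.pos
  have hNp : p ^ (s - 1) * p = p ^ s := by
    rw [← pow_succ]
    congr 1
    omega
  have hxcast : (p : ZMod (p^s)) ^ (s-1) * u = ((p ^ (s-1) * u.val : ℕ) : ZMod (p^s)) := by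
    push_cast
    rw [ZMod.natCast_val, ZMod.cast_id]
  have hxval : ((p : ZMod (p^s)) ^ (s-1) * u).val = p ^ (s-1) * (u.val % p) := by
    have h := Nat.mul_mod_mul_left (p ^ (s-1)) u.val p
    rw [hNp] at h
    rw [hxcast, ZMod.val_natCast, h]
  have hconst : ∀ j, gray p s ((p : ZMod (p^s)) ^ (s-1) * u) j = ((u.val : ℕ) : ZMod p) := by
    intro j
    unfold gray
    rw [hxval, Nat.mul_mod_right, Nat.mul_div_cancel_left _ hN,
      if_neg (Nat.not_lt_zero _), ZMod.natCast_mod]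
  refine ⟨?_, hconst⟩
  intro j
  have hr : y.val % p ^ (s-1) < p ^ (s-1) := Nat.mod_lt _ hN
  have hsum : ((p : ZMod (p^s)) ^ (s-1) * u + y).val
      = p ^ (s-1) * ((u.val % p + y.val / p ^ (s-1)) % p) + y.val % p ^ (s-1) := by
    have h2 := modhelper (p ^ (s-1)) p (u.val % p + y.val / p ^ (s-1)) (y.val % p ^ (s-1))
      hN hp.pos hr
    rw [hNp] at h2
    rw [ZMod.val_add, hxval, ← h2]
    congr 1
    conv_lhs => rw [← Nat.div_add_mod y.val (p ^ (s-1))]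
    ring
  have hmod : ((p : ZMod (p^s)) ^ (s-1) * u + y).val % p ^ (s-1) = y.val % p ^ (s-1) := by
    rw [hsum, Nat.mul_add_mod, Nat.mod_eq_of_lt hr]
  have hdiv : ((p : ZMod (p^s)) ^ (s-1) * u + y).val / p ^ (s-1)
      = (u.val % p + y.val / p ^ (s-1)) % p := by
    rw [hsum, Nat.mul_add_div hN, Nat.div_eq_of_lt hr, Nat.add_zero]
  rw [hconst j]
  unfold gray
  rw [hmod, hdiv]
  split_ifs with h
  · push_cast [ZMod.natCast_mod]
    ring
  · push_cast [ZMod.natCast_mod]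
    ring

/-- If `v = p^(s-1)·u` (so `v` has order dividing `p`), then
`φ_L(v + w) = φ_L(v) + φ_L(w)` for every `w`, and `φ_L(v)` is a constant-blocks
vector: each block `φ_L(v_i)` is constantly `u_i mod p`. -/

theorem grayV_order_p_additive_and_const (p s n : ℕ) (hp : p.Prime) (hs : 1 ≤ s)
    (u w : Fin n → ZMod (p ^ s)) :
    grayV p s n ((p : ZMod (p ^ s)) ^ (s - 1) • u + w) =
      grayV p s n ((p : ZMod (p ^ s)) ^ (s - 1) • u) + grayV p s n w ∧
    ∀ i j, grayV p s n ((p : ZMod (p ^ s)) ^ (s - 1) • u) i j =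
      (((u i).val : ℕ) : ZMod p) := by
  constructor
  · funext i j
    have hk := (key p s hp hs (u i) (w i)).1 j
    simpa [grayV, Pi.add_apply, Pi.smul_apply, smul_eq_mul] using hk
  · intro i j
    have hk := (key p s hp hs (u i) (w i)).2 j
    simpa [grayV, Pi.smul_apply, smul_eq_mul] using hk
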